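/- Let G be a simple graph with non-adjacent distinguished vertices m₁, m₂ such that G + m₁m₂ is 3-vertex-connected. Then no vertex r of G is a cutvertex of G separating some vertex from both m₁ and m₂; that is, for every vertex r and every vertex u ≠ r, there is a path from u to m₁ or to m₂ in G − r. -/
import Mathlib


/-- `G` with the extra edge `a b` added. -/
def addEdge {V : Type*} (G : SimpleGraph V) (a b : V) : SimpleGraph V :=
  G ⊔ SimpleGraph.fromEdgeSet {s(a, b)}

/-- `G` is `k`-vertex-connected: more than `k` vertices and deleting any fewer
than `k` vertices leaves the graph connected. -/
def KConn {V : Type*} [Fintype V] [DecidableEq V] (G : SimpleGraph V) (k : ℕ) : Prop :=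
  k < Fintype.card V ∧
    ∀ S : Finset V, S.card < k → (G.induce ((↑S : Set V)ᶜ)).Connected

lemma addEdge_induce_eq {V : Type*} (G : SimpleGraph V) (a b : V) (s : Set V)
    (h : a ∉ s ∨ b ∉ s) : (addEdge G a b).induce s = G.induce s := by
  ext ⟨v, hv⟩ ⟨w, hw⟩
  simp only [SimpleGraph.comap_adj, Function.Embedding.coe_subtype, addEdge,
    SimpleGraph.sup_adj, SimpleGraph.fromEdgeSet_adj, Set.mem_singleton_iff, Sym2.eq_iff]
  constructor
  · rintro (h' | ⟨(⟨rfl, rfl⟩ | ⟨rfl, rfl⟩), _⟩)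
    · exact h'
    · rcases h with h | h
      · exact absurd hv h
      · exact absurd hw h
    · rcases h with h | h
      · exact absurd hw h
      · exact absurd hv h
  · exact Or.inl

def homOfLE' {V : Type*} (G : SimpleGraph V) {s t : Set V} (h : s ⊆ t) :
    G.induce s →g G.induce t where
  toFun v := ⟨v.1, h v.2⟩
  map_rel' := fun ha => ha

theorem stmt_7 {V : Type*} [Fintype V] [DecidableEq V]
    (G : SimpleGraph V) (m₁ m₂ : V) (hne : m₁ ≠ m₂) (hnadj : ¬ G.Adj m₁ m₂)
    (h3 : KConn (addEdge G m₁ m₂) 3) :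
    ∀ (r u : V) (hu : u ∈ (({r} : Set V)ᶜ)),
      ∃ m, (m = m₁ ∨ m = m₂) ∧ ∃ hm : m ∈ (({r} : Set V)ᶜ),
        (G.induce (({r} : Set V)ᶜ)).Reachable ⟨u, hu⟩ ⟨m, hm⟩ := by
  intro r u hu
  obtain ⟨-, hconn⟩ := h3
  have hur : u ≠ r := by simpa using hu
  by_cases hr1 : r = m₁
  · subst hr1
    have hc := hconn {r} (by simp)
    rw [Finset.coe_singleton, addEdge_induce_eq G r m₂ _ (Or.inl (by simp))] at hc
    have hm2 : m₂ ∈ (({r} : Set V)ᶜ) := by simpa using hne.symm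
    exact ⟨m₂, Or.inr rfl, hm2, hc.preconnected _ _⟩
  by_cases hr2 : r = m₂
  · subst hr2
    have hc := hconn {r} (by simp)
    rw [Finset.coe_singleton, addEdge_induce_eq G m₁ r _ (Or.inr (by simp))] at hc
    have hm1 : m₁ ∈ (({r} : Set V)ᶜ) := by simpa using hne
    exact ⟨m₁, Or.inl rfl, hm1, hc.preconnected _ _⟩
  by_cases hu1 : u = m₁
  · subst hu1
    exact ⟨u, Or.inl rfl, hu, SimpleGraph.Reachable.refl _⟩
  by_cases hu2 : u = m₂
  · subst hu2
    exact ⟨u, Or.inr rfl, hu, SimpleGraph.Reachable.refl _⟩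
  · have hc := hconn {r, m₁} (by
      apply lt_of_le_of_lt (Finset.card_insert_le _ _); simp)
    have hs : ((↑({r, m₁} : Finset V) : Set V)) = ({r, m₁} : Set V) := by simp
    rw [hs, addEdge_induce_eq G m₁ m₂ _ (Or.inl (by simp))] at hc
    have husub : u ∈ (({r, m₁} : Set V)ᶜ) := by simp [hur, hu1]
    have hm2 : m₂ ∈ (({r, m₁} : Set V)ᶜ) := by simp [Ne.symm hr2, hne.symm]
    have hreach := hc.preconnected ⟨u, husub⟩ ⟨m₂, hm2⟩
    have hsub : (({r, m₁} : Set V)ᶜ) ⊆ (({r} : Set V)ᶜ) := by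
      intro x hx; simp at hx ⊢; exact hx.1
    exact ⟨m₂, Or.inr rfl, by simpa using Ne.symm hr2, hreach.map (homOfLE' G hsub)⟩
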